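/- Let F : ℝⁿ → ℝᵐ be continuously differentiable and let X = {x | ⟨a, x⟩ ≤ β} be a closed half-space with a ≠ 0. For x̄ on the boundary of X (i.e., ⟨a, x̄⟩ = β), the projectional coderivative of F with respect to X at x̄ is: D*_X F(x̄)(y) = the segment [∇F(x̄)*y, proj_{[a]^⊥}(∇F(x̄)*y)] if ⟨∇F(x̄)*y, a⟩ ≤ 0, and the two-point set {∇F(x̄)*y, proj_{[a]^⊥}(∇F(x̄)*y)} if ⟨∇F(x̄)*y, a⟩ > 0. -/

import Mathlib

open Filter Metric Set
open scoped Topology RealInnerProductSpace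

noncomputable section

abbrev Eu (n : ℕ) := EuclideanSpace ℝ (Fin n)

section GeneralDefs

variable {E F : Type*} [NormedAddCommGroup E] [NormedSpace ℝ E]
  [NormedAddCommGroup F] [NormedSpace ℝ F]

/-- `v` is a proximal normal vector to `A` at `a`: for some `t > 0`,
`a` is a nearest point of `A` to `a + t • v`. -/
def proxNormal (A : Set E) (a : E) : Set E :=
  {v | ∃ t : ℝ, 0 < t ∧ ‖t • v‖ = Metric.infDist (a + t • v) A}

/-- the set of nearest points of `K` to `x` (metric projection). -/
def projSet (K : Set E) (x : E) : Set E :=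
  {y | y ∈ K ∧ ∀ z ∈ K, ‖x - y‖ ≤ ‖x - z‖}

/-- the contingent (tangent) cone to `X` at `x`. -/
def tangCone (X : Set E) (x : E) : Set E :=
  {w | ∃ (t : ℕ → ℝ) (v : ℕ → E), (∀ k, 0 < t k) ∧ Tendsto t atTop (𝓝 0) ∧
    Tendsto v atTop (𝓝 w) ∧ ∀ k, x + t k • v k ∈ X}

/-- `A` is locally closed at `a`. -/
def LocallyClosedAt (A : Set E) (a : E) : Prop := ∃ U ∈ 𝓝 a, IsClosed (A ∩ U)

/-- the graph of the restriction `S|_X`. -/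
def svGraph (S : E → Set F) (X : Set E) : Set (E × F) := {p | p.1 ∈ X ∧ p.2 ∈ S p.1}

/-- the Lipschitz-like property of `S` relative to `X` at `x₀` for `u₀` with constant `κ`. -/
def LipschitzLikeRel (S : E → Set F) (X : Set E) (x₀ : E) (u₀ : F) (κ : ℝ) : Prop :=
  LocallyClosedAt (svGraph S univ) (x₀, u₀) ∧
  ∃ V ∈ 𝓝 x₀, ∃ W ∈ 𝓝 u₀, ∀ x ∈ X ∩ V, ∀ x' ∈ X ∩ V, ∀ u ∈ S x' ∩ W,
    ∃ u'' ∈ S x, ‖u - u''‖ ≤ κ * ‖x' - x‖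

/-- the graphical modulus of `S` relative to `X` at `x₀` for `u₀` (as an extended real,
the infimum of all Lipschitz-like constants). -/
def gmod (S : E → Set F) (X : Set E) (x₀ : E) (u₀ : F) : EReal :=
  sInf {c : EReal | ∃ κ : ℝ, 0 ≤ κ ∧ c = (κ : EReal) ∧
    ∃ V ∈ 𝓝 x₀, ∃ W ∈ 𝓝 u₀, ∀ x ∈ X ∩ V, ∀ x' ∈ X ∩ V, ∀ u ∈ S x' ∩ W,
      ∃ u'' ∈ S x, ‖u - u''‖ ≤ κ * ‖x' - x‖}

/-- the horizon cone of `A`. -/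
def horizonCone (A : Set E) : Set E :=
  {w | ∃ (a : ℕ → E) (l : ℕ → ℝ), (∀ k, a k ∈ A) ∧ (∀ k, 0 < l k) ∧
    Tendsto l atTop (𝓝 0) ∧ Tendsto (fun k => l k • a k) atTop (𝓝 w)}

/-- extended-real absolute difference `|a - b|`. -/
def eabsdiff (a b : EReal) : EReal := max (a - b) (b - a)

/-- `f` is locally Lipschitz continuous at `x₀` relative to `X`. -/
def RelLipschitzAt (f : E → EReal) (X : Set E) (x₀ : E) : Prop :=
  ∃ κ : ℝ, 0 ≤ κ ∧ ∃ V ∈ 𝓝 x₀, ∀ x ∈ X ∩ V, ∀ y ∈ X ∩ V,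
    eabsdiff (f x) (f y) ≤ ((κ * ‖x - y‖ : ℝ) : EReal)

/-- the Lipschitz modulus of `f` at `x₀` relative to `X` (as an extended real). -/
def relLipMod (f : E → EReal) (X : Set E) (x₀ : E) : EReal :=
  sInf {c : EReal | ∃ κ : ℝ, 0 ≤ κ ∧ c = (κ : EReal) ∧ ∃ V ∈ 𝓝 x₀,
    ∀ x ∈ X ∩ V, ∀ y ∈ X ∩ V, eabsdiff (f x) (f y) ≤ ((κ * ‖x - y‖ : ℝ) : EReal)}

end GeneralDefs

section InnerDefs

variable {E F : Type*} [NormedAddCommGroup E] [InnerProductSpace ℝ E]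
  [NormedAddCommGroup F] [InnerProductSpace ℝ F]

/-- the regular (Fréchet) normal cone to `A ⊆ E × F` at `a`. -/
def regNormalP (A : Set (E × F)) (a : E × F) : Set (E × F) :=
  {v | ∀ ε : ℝ, 0 < ε → ∃ δ > 0, ∀ b ∈ A, ‖b - a‖ ≤ δ →
    ⟪v.1, b.1 - a.1⟫ + ⟪v.2, b.2 - a.2⟫ ≤ ε * ‖b - a‖}

/-- the limiting (Mordukhovich) normal cone to `A ⊆ E × F` at `a`. -/
def limNormalP (A : Set (E × F)) (a : E × F) : Set (E × F) :=
  {v | ∃ (b : ℕ → E × F) (w : ℕ → E × F), (∀ k, b k ∈ A) ∧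
    (∀ k, w k ∈ regNormalP A (b k)) ∧ Tendsto b atTop (𝓝 a) ∧ Tendsto w atTop (𝓝 v)}

/-- the limiting coderivative of `S` at `x` for `u`:
`xs ∈ coderiv S x u us ↔ (xs, -us) ∈ N_{graph S}(x, u)`. -/
def coderiv (S : E → Set F) (x : E) (u : F) (us : F) : Set E :=
  {xs | (xs, -us) ∈ limNormalP (svGraph S univ) (x, u)}

/-- the projectional coderivative of `S` at `x₀` for `u₀` with respect to `X`. -/
def projCoderiv (S : E → Set F) (X : Set E) (x₀ : E) (u₀ : F) (us : F) : Set E :=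
  {xs | ∃ (x : ℕ → E) (u : ℕ → F) (xv : ℕ → E) (uv : ℕ → F) (y : ℕ → E),
    (∀ k, (x k, u k) ∈ svGraph S X) ∧
    (∀ k, (xv k, -(uv k)) ∈ limNormalP (svGraph S X) (x k, u k)) ∧
    (∀ k, y k ∈ projSet (tangCone X (x k)) (xv k)) ∧
    Tendsto x atTop (𝓝 x₀) ∧ Tendsto u atTop (𝓝 u₀) ∧
    Tendsto uv atTop (𝓝 us) ∧ Tendsto y atTop (𝓝 xs)}

/-- the regular (Fréchet) subdifferential of an extended-real-valued function. -/
def regSubdiff (g : E → EReal) (x : E) : Set E :=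
  {v | ∀ ε : ℝ, 0 < ε → ∃ δ > 0, ∀ y, ‖y - x‖ ≤ δ →
    g x + ((⟪v, y - x⟫ - ε * ‖y - x‖ : ℝ) : EReal) ≤ g y}

/-- the limiting (Mordukhovich) subdifferential. -/
def limSubdiff (g : E → EReal) (x : E) : Set E :=
  {v | ∃ (xk vk : ℕ → E), Tendsto xk atTop (𝓝 x) ∧
    Tendsto (fun k => g (xk k)) atTop (𝓝 (g x)) ∧
    (∀ k, vk k ∈ regSubdiff g (xk k)) ∧ Tendsto vk atTop (𝓝 v)}

/-- the horizon (singular) subdifferential. -/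
def horizonSubdiff (g : E → EReal) (x : E) : Set E :=
  {v | ∃ (xk vk : ℕ → E) (lk : ℕ → ℝ), Tendsto xk atTop (𝓝 x) ∧
    Tendsto (fun k => g (xk k)) atTop (𝓝 (g x)) ∧ (∀ k, 0 < lk k) ∧
    Tendsto lk atTop (𝓝 0) ∧ (∀ k, vk k ∈ regSubdiff g (xk k)) ∧
    Tendsto (fun k => lk k • vk k) atTop (𝓝 v)}

/-- the outer limiting subdifferential of `g` at `xb` with respect to `vb`. -/
def outerSubdiffWrt (g : E → EReal) (xb vb : E) : Set E :=
  {v | ∃ (xk vk : ℕ → E), Tendsto xk atTop (𝓝 xb) ∧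
    Tendsto (fun k => g (xk k)) atTop (𝓝 (g xb)) ∧
    (∀ k, g xb + ((⟪vb, xk k - xb⟫ : ℝ) : EReal) < g (xk k)) ∧
    (∀ k, vk k ∈ limSubdiff g (xk k)) ∧ Tendsto vk atTop (𝓝 v)}

/-- `D` is a convex polyhedron (finite intersection of closed half-spaces). -/
def IsPolyhedral (D : Set E) : Prop :=
  ∃ s : Finset (E × ℝ), D = {v | ∀ p ∈ s, ⟪p.1, v⟫ ≤ p.2}

/-- the support function of `D`. -/
def supportFn (D : Set E) : E → EReal :=
  fun x => sSup ((fun v => ((⟪v, x⟫ : ℝ) : EReal)) '' D)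

end InnerDefs

set_option maxHeartbeats 1000000

section Aux

variable {n : ℕ}

lemma projSet_univ (x : Eu n) : projSet (univ : Set (Eu n)) x = {x} := by
  ext y
  simp only [projSet, mem_setOf_eq, mem_univ, true_and, mem_singleton_iff]
  constructor
  · intro h
    have := h x (mem_univ x)
    simp only [sub_self, norm_zero] at this
    have : x - y = 0 := by
      rw [← norm_eq_zero]; exact le_antisymm this (norm_nonneg _)
    have := sub_eq_zero.mp this
    exact this.symm
  · rintro rfl
    intro z _
    simp

lemma proj_halfspace_key (a : Eu n) (ha : a ≠ 0) (v z : Eu n) (hz : ⟪a, z⟫ ≤ 0) :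
    ‖v - (v - (max ⟪v, a⟫ 0 / ‖a‖ ^ 2) • a)‖ ^ 2 +
      ‖(v - (max ⟪v, a⟫ 0 / ‖a‖ ^ 2) • a) - z‖ ^ 2 ≤ ‖v - z‖ ^ 2 := by
  set c : ℝ := max ⟪v, a⟫ 0 / ‖a‖ ^ 2 with hc
  set p : Eu n := v - c • a with hp
  have hna : (0:ℝ) < ‖a‖ ^ 2 := by
    have : 0 < ‖a‖ := norm_pos_iff.mpr ha
    positivity
  have hcnn : 0 ≤ c := div_nonneg (le_max_right _ _) hna.le
  have hap : c * ⟪a, p⟫ = 0 := by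
    have h1 : ⟪a, p⟫ = ⟪a, v⟫ - c * ⟪a, a⟫ := by
      rw [hp, inner_sub_right, real_inner_smul_right]
    rw [real_inner_self_eq_norm_sq] at h1
    rcases le_or_gt ⟪v, a⟫ 0 with h | h
    · have : c = 0 := by rw [hc, max_eq_right h]; simp
      rw [this]; ring
    · have hceq : c = ⟪v, a⟫ / ‖a‖ ^ 2 := by rw [hc, max_eq_left h.le]
      have : ⟪a, p⟫ = 0 := by
        rw [h1, hceq, div_mul_cancel₀ _ hna.ne', real_inner_comm, sub_self]
      rw [this]; ring
  have hexp : ‖v - z‖ ^ 2 = ‖v - p‖ ^ 2 + 2 * ⟪v - p, p - z⟫ + ‖p - z‖ ^ 2 := by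
    have h2 : v - z = (v - p) + (p - z) := by abel
    rw [h2, @norm_add_sq_real]
  have hip : 0 ≤ ⟪v - p, p - z⟫ := by
    have h3 : v - p = c • a := by rw [hp]; abel
    rw [h3, real_inner_smul_left, inner_sub_right]
    have : c * ⟪a, z⟫ ≤ 0 := mul_nonpos_of_nonneg_of_nonpos hcnn hz
    nlinarith [hap]
  nlinarith [hexp, hip]

lemma projSet_halfspace (a : Eu n) (ha : a ≠ 0) (v : Eu n) :
    projSet {w : Eu n | ⟪a, w⟫ ≤ 0} v = {v - (max ⟪v, a⟫ 0 / ‖a‖ ^ 2) • a} := by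
  set c : ℝ := max ⟪v, a⟫ 0 / ‖a‖ ^ 2 with hc
  set p : Eu n := v - c • a with hp
  have hna : (0:ℝ) < ‖a‖ ^ 2 := by
    have : 0 < ‖a‖ := norm_pos_iff.mpr ha
    positivity
  have hpK : ⟪a, p⟫ ≤ 0 := by
    have h1 : ⟪a, p⟫ = ⟪a, v⟫ - c * ⟪a, a⟫ := by
      rw [hp, inner_sub_right, real_inner_smul_right]
    rw [real_inner_self_eq_norm_sq] at h1
    rcases le_or_gt ⟪v, a⟫ 0 with h | h
    · have hc0 : c = 0 := by rw [hc, max_eq_right h]; simp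
      rw [h1, hc0]; have h' := real_inner_comm a v; linarith
    · have hceq : c = ⟪v, a⟫ / ‖a‖ ^ 2 := by rw [hc, max_eq_left h.le]
      rw [h1, hceq, div_mul_cancel₀ _ hna.ne', real_inner_comm, sub_self]
  ext y
  simp only [projSet, mem_setOf_eq, mem_singleton_iff]
  constructor
  · rintro ⟨hyK, hmin⟩
    have h1 := hmin p hpK
    have h2 := proj_halfspace_key a ha v y hyK
    rw [← hc, ← hp] at h2
    have : ‖p - y‖ ^ 2 ≤ 0 := by nlinarith [norm_nonneg (v - p), norm_nonneg (v - y)]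
    have : p - y = 0 := by
      rw [← norm_eq_zero]; nlinarith [norm_nonneg (p - y)]
    exact (sub_eq_zero.mp this).symm
  · rintro rfl
    refine ⟨hpK, fun z hz => ?_⟩
    have h2 := proj_halfspace_key a ha v z hz
    rw [← hc, ← hp] at h2
    nlinarith [norm_nonneg (v - p), norm_nonneg (v - z), norm_nonneg (p - z)]

lemma tendsto_inv_succ : Tendsto (fun k : ℕ => (1 : ℝ) / (k + 1)) atTop (𝓝 0) :=
  tendsto_one_div_add_atTop_nhds_zero_nat

lemma tangCone_interior (a : Eu n) (β : ℝ) (x : Eu n) (hx : ⟪a, x⟫ < β) :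
    tangCone {x : Eu n | ⟪a, x⟫ ≤ β} x = univ := by
  ext w
  simp only [mem_univ, iff_true, tangCone, mem_setOf_eq]
  set δ : ℝ := (β - ⟪a, x⟫) / (|⟪a, w⟫| + 1) with hδ
  have hδpos : 0 < δ := by
    apply div_pos (by linarith) (by positivity)
  refine ⟨fun k => δ / (k + 1), fun _ => w, fun k => by positivity, ?_, tendsto_const_nhds, ?_⟩
  · have := tendsto_inv_succ.const_mul δ
    simpa [div_eq_mul_inv, mul_comm] using this
  · intro k
    have htk : δ / (k + 1 : ℝ) ≤ δ := by
      rw [div_le_iff₀ (by positivity)]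
      nlinarith [hδpos, (Nat.cast_nonneg k : (0:ℝ) ≤ k)]
    have htkpos : (0:ℝ) < δ / (k + 1) := by positivity
    simp only [mem_setOf_eq, inner_add_right, real_inner_smul_right]
    have h1 : δ / (k+1) * ⟪a, w⟫ ≤ δ * |⟪a, w⟫| := by
      calc δ / (k+1) * ⟪a, w⟫ ≤ δ / (k+1) * |⟪a, w⟫| :=
            mul_le_mul_of_nonneg_left (le_abs_self _) htkpos.le
        _ ≤ δ * |⟪a, w⟫| := mul_le_mul_of_nonneg_right htk (abs_nonneg _)
    have h2 : δ * |⟪a, w⟫| ≤ β - ⟪a, x⟫ := by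
      rw [hδ, div_mul_eq_mul_div, div_le_iff₀ (by positivity)]
      nlinarith [abs_nonneg ⟪a, w⟫, sub_pos.mpr hx]
    linarith

lemma tangCone_boundary (a : Eu n) (β : ℝ) (x : Eu n) (hx : ⟪a, x⟫ = β) :
    tangCone {x : Eu n | ⟪a, x⟫ ≤ β} x = {w : Eu n | ⟪a, w⟫ ≤ 0} := by
  ext w
  simp only [tangCone, mem_setOf_eq]
  constructor
  · rintro ⟨t, v, htpos, _, hv, hmem⟩
    have hkey : ∀ k, ⟪a, v k⟫ ≤ 0 := by
      intro k
      have := hmem k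
      simp only [mem_setOf_eq, inner_add_right, real_inner_smul_right, hx] at this
      nlinarith [htpos k]
    have hlim : Tendsto (fun k => ⟪a, v k⟫) atTop (𝓝 ⟪a, w⟫) :=
      (Tendsto.inner tendsto_const_nhds hv)
    exact le_of_tendsto hlim (Filter.Eventually.of_forall hkey)
  · intro hw
    refine ⟨fun k => 1 / (k + 1), fun _ => w, fun k => by positivity,
      tendsto_inv_succ, tendsto_const_nhds, fun k => ?_⟩
    simp only [mem_setOf_eq, inner_add_right, real_inner_smul_right, hx]
    nlinarith [(by positivity : (0:ℝ) < 1 / ((k:ℝ) + 1)), hw]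

end Aux

section NormalCones

variable {n m : ℕ}

open ContinuousLinearMap in
lemma regN_mem (F : Eu n → Eu m) (hF : ContDiff ℝ 1 F) (a : Eu n) (β : ℝ)
    (x : Eu n) (hx : ⟪a, x⟫ ≤ β) (us : Eu m) (t : ℝ) (ht : 0 ≤ t)
    (hbd : t = 0 ∨ ⟪a, x⟫ = β) :
    ((ContinuousLinearMap.adjoint (fderiv ℝ F x)) us + t • a, -us) ∈
      regNormalP (svGraph (fun x => ({F x} : Set (Eu m))) {x : Eu n | ⟪a, x⟫ ≤ β})
        (x, F x) := by
  intro ε hε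
  set A := fderiv ℝ F x with hA
  set ε' : ℝ := ε / (‖us‖ + 1) with hε'
  have hε'pos : 0 < ε' := by positivity
  have hd : HasFDerivAt F A x := (hF.differentiable one_ne_zero x).hasFDerivAt
  have hlo := Asymptotics.isLittleO_iff.mp hd.isLittleO hε'pos
  rw [Metric.eventually_nhds_iff] at hlo
  obtain ⟨δ, hδ, hδ'⟩ := hlo
  refine ⟨δ / 2, by positivity, ?_⟩
  rintro ⟨x', u'⟩ ⟨hx', hu'⟩ hnear
  have hu'' : u' = F x' := hu'
  subst hu''
  have h1 : ‖x' - x‖ ≤ ‖((x', F x') : Eu n × Eu m) - (x, F x)‖ := by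
    simpa using norm_fst_le (((x', F x') : Eu n × Eu m) - (x, F x))
  have hdist : dist x' x < δ := by
    rw [dist_eq_norm]; linarith
  have hres := hδ' hdist
  simp only at hres ⊢
  have e1 : ⟪(ContinuousLinearMap.adjoint A) us, x' - x⟫ = ⟪us, A (x' - x)⟫ :=
    ContinuousLinearMap.adjoint_inner_left A (x' - x) us
  have e2 : ⟪us, F x' - F x⟫ - ⟪us, A (x' - x)⟫ = ⟪us, F x' - F x - A (x' - x)⟫ := by
    rw [← inner_sub_right]
  have e3 : -⟪us, F x' - F x - A (x' - x)⟫ ≤ ‖us‖ * ‖F x' - F x - A (x' - x)‖ := by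
    have := abs_real_inner_le_norm us (F x' - F x - A (x' - x))
    have h' := neg_abs_le ⟪us, F x' - F x - A (x' - x)⟫
    linarith
  have e4 : t * ⟪a, x' - x⟫ ≤ 0 := by
    rcases hbd with rfl | hb
    · simp
    · have hxx : ⟪a, x' - x⟫ = ⟪a, x'⟫ - β := by rw [inner_sub_right, hb]
      have hx'' : ⟪a, x'⟫ ≤ β := hx'
      nlinarith
  have e5 : ‖us‖ * ε' ≤ ε := by
    have hq : ε' * (‖us‖ + 1) = ε := div_mul_cancel₀ ε (by positivity)
    nlinarith [norm_nonneg us, hε'pos.le]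
  have e6 : ‖us‖ * ‖F x' - F x - A (x' - x)‖ ≤ ‖us‖ * (ε' * ‖x' - x‖) :=
    mul_le_mul_of_nonneg_left hres (norm_nonneg us)
  have e7 : ε * ‖x' - x‖ ≤ ε * ‖((x', F x') : Eu n × Eu m) - (x, F x)‖ :=
    mul_le_mul_of_nonneg_left h1 hε.le
  have goal_eq : ⟪(ContinuousLinearMap.adjoint A) us + t • a, x' - x⟫ + ⟪-us, F x' - F x⟫
      = -⟪us, F x' - F x - A (x' - x)⟫ + t * ⟪a, x' - x⟫ := by
    rw [inner_add_left, real_inner_smul_left, inner_neg_left, e1, ← e2]; ring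
  rw [goal_eq]
  nlinarith [norm_nonneg (x' - x), mul_le_mul_of_nonneg_left (mul_le_mul_of_nonneg_left h1 hε'pos.le) (norm_nonneg us)]

open ContinuousLinearMap in
lemma regN_sub (F : Eu n → Eu m) (hF : ContDiff ℝ 1 F) (a : Eu n) (β : ℝ)
    (x : Eu n) (hx : ⟪a, x⟫ ≤ β) (v1 : Eu n) (v2 : Eu m)
    (hv : (v1, v2) ∈ regNormalP
      (svGraph (fun x => ({F x} : Set (Eu m))) {x : Eu n | ⟪a, x⟫ ≤ β}) (x, F x))
    (w : Eu n) (hw : ⟪a, x⟫ < β ∨ ⟪a, w⟫ ≤ 0) :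
    ⟪v1 + (ContinuousLinearMap.adjoint (fderiv ℝ F x)) v2, w⟫ ≤ 0 := by
  rcases eq_or_ne w 0 with rfl | hw0
  · simp
  have hwn : 0 < ‖w‖ := norm_pos_iff.mpr hw0
  set A := fderiv ℝ F x with hA
  set z := v1 + (ContinuousLinearMap.adjoint A) v2 with hz
  by_contra hpos
  push_neg at hpos
  set C : ℝ := ‖w‖ * (1 + ‖A‖) + ‖v2‖ * ‖w‖ + 1 with hC
  have hCpos : 0 < C := by positivity
  set ε : ℝ := min 1 (⟪z, w⟫ / (2 * C)) with hε
  have hεpos : 0 < ε := lt_min one_pos (by positivity)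
  have hε1 : ε ≤ 1 := min_le_left _ _
  obtain ⟨δ, hδ, hvδ⟩ := hv ε hεpos
  have hd : HasFDerivAt F A x := (hF.differentiable one_ne_zero x).hasFDerivAt
  have hlo := Asymptotics.isLittleO_iff.mp hd.isLittleO hεpos
  rw [Metric.eventually_nhds_iff] at hlo
  obtain ⟨δ2, hδ2, hδ2'⟩ := hlo
  -- choose step size h
  obtain ⟨h, hhpos, hmemX, hh2, hhδ⟩ : ∃ h : ℝ, 0 < h ∧ ⟪a, x + h • w⟫ ≤ β ∧
      dist (x + h • w) x < δ2 ∧ h * (‖w‖ * (1 + ‖A‖)) ≤ δ := by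
    have hd2 : ∀ h : ℝ, dist (x + h • w) x = |h| * ‖w‖ := by
      intro h
      rw [dist_eq_norm]
      simp [norm_smul, abs_mul]
    set h1 : ℝ := min (δ2 / (2 * ‖w‖)) (δ / (‖w‖ * (1 + ‖A‖))) with hh1
    have hh1pos : 0 < h1 := lt_min (by positivity) (by positivity)
    have base : ∀ h : ℝ, 0 < h → h ≤ h1 → dist (x + h • w) x < δ2 ∧
        h * (‖w‖ * (1 + ‖A‖)) ≤ δ := by
      intro h hp hle
      constructor
      · rw [hd2, abs_of_pos hp]
        have : h ≤ δ2 / (2 * ‖w‖) := le_trans hle (min_le_left _ _)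
        calc h * ‖w‖ ≤ δ2 / (2 * ‖w‖) * ‖w‖ := mul_le_mul_of_nonneg_right this hwn.le
          _ = δ2 / 2 := by field_simp
          _ < δ2 := by linarith
      · have h2' : h ≤ δ / (‖w‖ * (1 + ‖A‖)) := le_trans hle (min_le_right _ _)
        calc h * (‖w‖ * (1 + ‖A‖)) ≤ δ / (‖w‖ * (1 + ‖A‖)) * (‖w‖ * (1 + ‖A‖)) :=
              mul_le_mul_of_nonneg_right h2' (by positivity)
          _ = δ := div_mul_cancel₀ δ (by positivity)
    rcases hw with hint | hwneg
    · set h2 : ℝ := (β - ⟪a, x⟫) / (|⟪a, w⟫| + 1) with hh2d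
      have hh2pos : 0 < h2 := div_pos (by linarith) (by positivity)
      refine ⟨min h1 h2, lt_min hh1pos hh2pos, ?_, (base _ (lt_min hh1pos hh2pos) (min_le_left _ _)).1,
        (base _ (lt_min hh1pos hh2pos) (min_le_left _ _)).2⟩
      rw [inner_add_right, real_inner_smul_right]
      have hm2 : min h1 h2 ≤ h2 := min_le_right _ _
      have hmp : 0 < min h1 h2 := lt_min hh1pos hh2pos
      have : min h1 h2 * ⟪a, w⟫ ≤ h2 * |⟪a, w⟫| := by
        calc min h1 h2 * ⟪a, w⟫ ≤ min h1 h2 * |⟪a, w⟫| :=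
              mul_le_mul_of_nonneg_left (le_abs_self _) hmp.le
          _ ≤ h2 * |⟪a, w⟫| := mul_le_mul_of_nonneg_right hm2 (abs_nonneg _)
      have h2b : h2 * |⟪a, w⟫| ≤ β - ⟪a, x⟫ := by
        rw [hh2d, div_mul_eq_mul_div, div_le_iff₀ (by positivity)]
        nlinarith [abs_nonneg ⟪a, w⟫, sub_pos.mpr hint]
      linarith
    · refine ⟨h1, hh1pos, ?_, (base _ hh1pos le_rfl).1, (base _ hh1pos le_rfl).2⟩
      rw [inner_add_right, real_inner_smul_right]
      nlinarith
  set x' := x + h • w with hx'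
  have hxx : x' - x = h • w := by rw [hx']; abel
  have hres : ‖F x' - F x - A (x' - x)‖ ≤ ε * ‖x' - x‖ := hδ2' hh2
  have hnx : ‖x' - x‖ = h * ‖w‖ := by
    rw [hxx, norm_smul, Real.norm_eq_abs, abs_of_pos hhpos]
  have hFb : ‖F x' - F x‖ ≤ h * (‖w‖ * (1 + ‖A‖)) := by
    have hAb : ‖A (x' - x)‖ ≤ ‖A‖ * ‖x' - x‖ := A.le_opNorm _
    calc ‖F x' - F x‖ = ‖(F x' - F x - A (x' - x)) + A (x' - x)‖ := by abel_nf
      _ ≤ ‖F x' - F x - A (x' - x)‖ + ‖A (x' - x)‖ := norm_add_le _ _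
      _ ≤ ε * ‖x' - x‖ + ‖A‖ * ‖x' - x‖ := add_le_add hres hAb
      _ ≤ 1 * ‖x' - x‖ + ‖A‖ * ‖x' - x‖ := by
          have := mul_le_mul_of_nonneg_right hε1 (norm_nonneg (x' - x)); linarith
      _ = h * (‖w‖ * (1 + ‖A‖)) := by rw [hnx]; ring
  have hbnorm : ‖((x', F x') : Eu n × Eu m) - (x, F x)‖ ≤ h * (‖w‖ * (1 + ‖A‖)) := by
    rw [Prod.norm_def]
    apply max_le
    · simp only [Prod.fst_sub]
      rw [hnx]
      have : (0:ℝ) ≤ h * ‖w‖ * ‖A‖ := by positivity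
      nlinarith
    · simpa using hFb
  have hmemG : ((x', F x') : Eu n × Eu m) ∈
      svGraph (fun x => ({F x} : Set (Eu m))) {x : Eu n | ⟪a, x⟫ ≤ β} :=
    ⟨hmemX, rfl⟩
  have hineq := hvδ (x', F x') hmemG (le_trans hbnorm hhδ)
  simp only at hineq
  -- rewrite the LHS
  have lhs_eq : ⟪v1, x' - x⟫ + ⟪v2, F x' - F x⟫
      = h * ⟪z, w⟫ + ⟪v2, F x' - F x - A (x' - x)⟫ := by
    have e1 : ⟪v2, F x' - F x - A (x' - x)⟫ = ⟪v2, F x' - F x⟫ - ⟪v2, A (x' - x)⟫ := by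
      rw [inner_sub_right]
    have e2 : ⟪v2, A (x' - x)⟫ = ⟪(ContinuousLinearMap.adjoint A) v2, x' - x⟫ :=
      (ContinuousLinearMap.adjoint_inner_left A (x' - x) v2).symm
    have e3 : ⟪z, x' - x⟫ = ⟪v1, x' - x⟫ + ⟪(ContinuousLinearMap.adjoint A) v2, x' - x⟫ := by
      rw [hz, inner_add_left]
    have e4 : ⟪z, x' - x⟫ = h * ⟪z, w⟫ := by rw [hxx, real_inner_smul_right]
    linarith [e1, e2, e3, e4]
  rw [lhs_eq] at hineq
  have hR : -⟪v2, F x' - F x - A (x' - x)⟫ ≤ ‖v2‖ * (ε * (h * ‖w‖)) := by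
    have h1 := abs_real_inner_le_norm v2 (F x' - F x - A (x' - x))
    have h2 := neg_abs_le ⟪v2, F x' - F x - A (x' - x)⟫
    have h3 : ‖v2‖ * ‖F x' - F x - A (x' - x)‖ ≤ ‖v2‖ * (ε * (h * ‖w‖)) := by
      apply mul_le_mul_of_nonneg_left _ (norm_nonneg v2)
      rw [← hnx]; exact hres
    linarith
  have hRHS : ε * ‖((x', F x') : Eu n × Eu m) - (x, F x)‖ ≤ ε * (h * (‖w‖ * (1 + ‖A‖))) :=
    mul_le_mul_of_nonneg_left hbnorm hεpos.le
  -- conclude h * ⟪z,w⟫ ≤ ε * h * (C - 1) < h * ⟪z,w⟫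
  have hfin : h * ⟪z, w⟫ ≤ ε * h * (C - 1) := by
    have : h * ⟪z, w⟫ ≤ ε * (h * (‖w‖ * (1 + ‖A‖))) + ‖v2‖ * (ε * (h * ‖w‖)) := by
      linarith
    calc h * ⟪z, w⟫ ≤ ε * (h * (‖w‖ * (1 + ‖A‖))) + ‖v2‖ * (ε * (h * ‖w‖)) := this
      _ = ε * h * (‖w‖ * (1 + ‖A‖) + ‖v2‖ * ‖w‖) := by ring
      _ = ε * h * (C - 1) := by rw [hC]; ring_nf
  have hεle : ε ≤ ⟪z, w⟫ / (2 * C) := min_le_right _ _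
  have : ⟪z, w⟫ ≤ ε * (C - 1) := by
    have := hfin
    nlinarith
  nlinarith [div_mul_cancel₀ ⟪z, w⟫ (by positivity : (2:ℝ) * C ≠ 0), hCpos, hpos, hεpos]

end NormalCones

section NormalCones2

variable {n m : ℕ}

lemma regN_struct (F : Eu n → Eu m) (hF : ContDiff ℝ 1 F) (a : Eu n) (ha : a ≠ 0) (β : ℝ)
    (x : Eu n) (hx : ⟪a, x⟫ ≤ β) (v1 : Eu n) (v2 : Eu m)
    (hv : (v1, v2) ∈ regNormalP
      (svGraph (fun x => ({F x} : Set (Eu m))) {x : Eu n | ⟪a, x⟫ ≤ β}) (x, F x)) :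
    ∃ t : ℝ, 0 ≤ t ∧ v1 = -((ContinuousLinearMap.adjoint (fderiv ℝ F x)) v2) + t • a ∧
      (⟪a, x⟫ < β → t = 0) := by
  set z := v1 + (ContinuousLinearMap.adjoint (fderiv ℝ F x)) v2 with hzd
  have hna : (0:ℝ) < ‖a‖ ^ 2 := by
    have : 0 < ‖a‖ := norm_pos_iff.mpr ha
    positivity
  rcases lt_or_eq_of_le hx with hint | hbd
  · have hz0 : z = 0 := by
      have h1 := regN_sub F hF a β x hx v1 v2 hv z (Or.inl hint)
      exact real_inner_self_nonpos.mp h1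
    refine ⟨0, le_rfl, ?_, fun _ => rfl⟩
    have : v1 = -((ContinuousLinearMap.adjoint (fderiv ℝ F x)) v2) := by
      have := hz0; rw [hzd] at this
      linear_combination (norm := module) this
    rw [this]; module
  · have hsub : ∀ w, ⟪a, w⟫ ≤ 0 → ⟪z, w⟫ ≤ 0 := fun w hw =>
      regN_sub F hF a β x hx v1 v2 hv w (Or.inr hw)
    set t : ℝ := ⟪z, a⟫ / ‖a‖ ^ 2 with htd
    have ht0 : 0 ≤ t := by
      have h1 : ⟪a, -a⟫ ≤ 0 := by
        rw [inner_neg_right]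
        have := real_inner_self_nonneg (x := a); linarith
      have h2 := hsub (-a) h1
      rw [inner_neg_right] at h2
      exact div_nonneg (by linarith) hna.le
    have hzeq : z = t • a := by
      set w := z - t • a with hwd
      have hta : t * ‖a‖ ^ 2 = ⟪z, a⟫ := by
        rw [htd]; field_simp
      have haw : ⟪a, w⟫ = 0 := by
        rw [hwd, inner_sub_right, real_inner_smul_right, real_inner_self_eq_norm_sq,
          real_inner_comm, hta, sub_self]
      have h1 : ⟪z, w⟫ ≤ 0 := hsub w (le_of_eq haw)
      have h2 : ⟪w, w⟫ ≤ 0 := by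
        have e : ⟪w, w⟫ = ⟪z, w⟫ - t * ⟪a, w⟫ := by
          rw [hwd]
          rw [inner_sub_left, real_inner_smul_left]
        rw [e, haw]; linarith
      have : w = 0 := real_inner_self_nonpos.mp h2
      rw [hwd] at this
      linear_combination (norm := module) this
    refine ⟨t, ht0, ?_, fun h => absurd hbd h.ne⟩
    rw [hzd] at hzeq
    linear_combination (norm := module) hzeq

lemma limN_mem (F : Eu n → Eu m) (hF : ContDiff ℝ 1 F) (a : Eu n) (β : ℝ)
    (x : Eu n) (hx : ⟪a, x⟫ ≤ β) (us : Eu m) (t : ℝ) (ht : 0 ≤ t)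
    (hbd : t = 0 ∨ ⟪a, x⟫ = β) :
    ((ContinuousLinearMap.adjoint (fderiv ℝ F x)) us + t • a, -us) ∈
      limNormalP (svGraph (fun x => ({F x} : Set (Eu m))) {x : Eu n | ⟪a, x⟫ ≤ β})
        (x, F x) :=
  ⟨fun _ => (x, F x), fun _ => ((ContinuousLinearMap.adjoint (fderiv ℝ F x)) us + t • a, -us),
    fun _ => ⟨hx, rfl⟩, fun _ => regN_mem F hF a β x hx us t ht hbd,
    tendsto_const_nhds, tendsto_const_nhds⟩

lemma adj_tendsto (F : Eu n → Eu m) (hF : ContDiff ℝ 1 F) {x : ℕ → Eu n} {u : ℕ → Eu m}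
    {x0 : Eu n} {u0 : Eu m} (hx : Tendsto x atTop (𝓝 x0)) (hu : Tendsto u atTop (𝓝 u0)) :
    Tendsto (fun k => (ContinuousLinearMap.adjoint (fderiv ℝ F (x k))) (u k)) atTop
      (𝓝 ((ContinuousLinearMap.adjoint (fderiv ℝ F x0)) u0)) := by
  set A0 := fderiv ℝ F x0 with hA0
  have hfd : Tendsto (fun k => fderiv ℝ F (x k)) atTop (𝓝 A0) :=
    ((hF.continuous_fderiv one_ne_zero).tendsto x0).comp hx
  rw [tendsto_iff_dist_tendsto_zero]
  have hb : ∀ k, dist ((ContinuousLinearMap.adjoint (fderiv ℝ F (x k))) (u k))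
      ((ContinuousLinearMap.adjoint A0) u0)
      ≤ ‖fderiv ℝ F (x k) - A0‖ * ‖u k‖ + ‖A0‖ * ‖u k - u0‖ := by
    intro k
    rw [dist_eq_norm]
    have e1 : (ContinuousLinearMap.adjoint (fderiv ℝ F (x k))) (u k) -
        (ContinuousLinearMap.adjoint A0) u0
        = (ContinuousLinearMap.adjoint (fderiv ℝ F (x k) - A0)) (u k)
          + (ContinuousLinearMap.adjoint A0) (u k - u0) := by
      rw [map_sub]
      simp only [ContinuousLinearMap.sub_apply, map_sub]
      abel
    rw [e1]
    refine le_trans (norm_add_le _ _) (add_le_add ?_ ?_)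
    · calc ‖(ContinuousLinearMap.adjoint (fderiv ℝ F (x k) - A0)) (u k)‖
          ≤ ‖ContinuousLinearMap.adjoint (fderiv ℝ F (x k) - A0)‖ * ‖u k‖ :=
            ContinuousLinearMap.le_opNorm _ _
        _ = ‖fderiv ℝ F (x k) - A0‖ * ‖u k‖ := by
            rw [LinearIsometryEquiv.norm_map]
    · calc ‖(ContinuousLinearMap.adjoint A0) (u k - u0)‖
          ≤ ‖ContinuousLinearMap.adjoint A0‖ * ‖u k - u0‖ :=
            ContinuousLinearMap.le_opNorm _ _
        _ = ‖A0‖ * ‖u k - u0‖ := by rw [LinearIsometryEquiv.norm_map]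
  have h0 : Tendsto (fun k => ‖fderiv ℝ F (x k) - A0‖ * ‖u k‖ + ‖A0‖ * ‖u k - u0‖)
      atTop (𝓝 (0 * ‖u0‖ + ‖A0‖ * 0)) := by
    refine Tendsto.add (Tendsto.mul ?_ hu.norm) (Tendsto.mul tendsto_const_nhds ?_)
    · exact tendsto_iff_norm_sub_tendsto_zero.mp hfd
    · exact tendsto_iff_norm_sub_tendsto_zero.mp hu
  rw [show (0 : ℝ) * ‖u0‖ + ‖A0‖ * 0 = 0 by ring] at h0
  exact squeeze_zero (fun k => dist_nonneg) hb h0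

lemma limN_struct (F : Eu n → Eu m) (hF : ContDiff ℝ 1 F) (a : Eu n) (ha : a ≠ 0) (β : ℝ)
    (x : Eu n) (hx : ⟪a, x⟫ ≤ β) (v1 : Eu n) (v2 : Eu m)
    (hv : (v1, v2) ∈ limNormalP
      (svGraph (fun x => ({F x} : Set (Eu m))) {x : Eu n | ⟪a, x⟫ ≤ β}) (x, F x)) :
    ∃ t : ℝ, 0 ≤ t ∧ v1 = -((ContinuousLinearMap.adjoint (fderiv ℝ F x)) v2) + t • a ∧
      (⟪a, x⟫ < β → t = 0) := by
  have hna : (0:ℝ) < ‖a‖ ^ 2 := by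
    have : 0 < ‖a‖ := norm_pos_iff.mpr ha
    positivity
  obtain ⟨b, w, hbA, hwreg, hbx, hwv⟩ := hv
  have hbX : ∀ k, ⟪a, (b k).1⟫ ≤ β := fun k => (hbA k).1
  have hbF : ∀ k, (b k).2 = F (b k).1 := fun k => (hbA k).2
  have hreg' : ∀ k, ((w k).1, (w k).2) ∈ regNormalP
      (svGraph (fun x => ({F x} : Set (Eu m))) {x : Eu n | ⟪a, x⟫ ≤ β})
      ((b k).1, F (b k).1) := by
    intro k
    have h := hwreg k
    rwa [show (b k) = ((b k).1, F (b k).1) by rw [← hbF k]] at h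
  choose t ht0 hteq htint using fun k =>
    regN_struct F hF a ha β (b k).1 (hbX k) (w k).1 (w k).2 (hreg' k)
  have hx1 : Tendsto (fun k => (b k).1) atTop (𝓝 x) := by
    have := (continuous_fst.tendsto ((x, F x) : Eu n × Eu m)).comp hbx
    exact this
  have hw1 : Tendsto (fun k => (w k).1) atTop (𝓝 v1) := by
    have := (continuous_fst.tendsto ((v1, v2) : Eu n × Eu m)).comp hwv
    exact this
  have hw2 : Tendsto (fun k => (w k).2) atTop (𝓝 v2) := by
    have := (continuous_snd.tendsto ((v1, v2) : Eu n × Eu m)).comp hwv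
    exact this
  have hadj := adj_tendsto F hF hx1 hw2
  set zf : ℕ → Eu n := fun k => (w k).1 +
    (ContinuousLinearMap.adjoint (fderiv ℝ F ((b k).1))) ((w k).2) with hzfd
  have hzf : Tendsto zf atTop
      (𝓝 (v1 + (ContinuousLinearMap.adjoint (fderiv ℝ F x)) v2)) := hw1.add hadj
  have hzt : ∀ k, zf k = t k • a := by
    intro k
    rw [hzfd]
    simp only
    rw [hteq k]
    module
  have htk : ∀ k, t k = ⟪zf k, a⟫ / ‖a‖ ^ 2 := by
    intro k
    rw [hzt k, real_inner_smul_left, real_inner_self_eq_norm_sq]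
    field_simp
  set T : ℝ := ⟪v1 + (ContinuousLinearMap.adjoint (fderiv ℝ F x)) v2, a⟫ / ‖a‖ ^ 2 with hTd
  have httend : Tendsto t atTop (𝓝 T) := by
    have h1 : Tendsto (fun k => ⟪zf k, a⟫ / ‖a‖ ^ 2) atTop (𝓝 T) :=
      (hzf.inner tendsto_const_nhds).div_const _
    exact h1.congr (fun k => (htk k).symm)
  have hT0 : 0 ≤ T := ge_of_tendsto httend (Filter.Eventually.of_forall ht0)
  have hTz : v1 + (ContinuousLinearMap.adjoint (fderiv ℝ F x)) v2 = T • a := by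
    have h2 : Tendsto zf atTop (𝓝 (T • a)) := by
      have := httend.smul_const a
      exact this.congr (fun k => (hzt k).symm)
    exact tendsto_nhds_unique hzf h2
  refine ⟨T, hT0, by linear_combination (norm := module) hTz, ?_⟩
  intro hint
  have hev : ∀ᶠ k in atTop, ⟪a, (b k).1⟫ < β := by
    have hcont : Tendsto (fun k => ⟪a, (b k).1⟫) atTop (𝓝 ⟪a, x⟫) :=
      Tendsto.inner tendsto_const_nhds hx1
    exact hcont.eventually (gt_mem_nhds hint)
  have hev0 : ∀ᶠ k in atTop, t k = 0 := hev.mono fun k hk => htint k hk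
  have ht0' : Tendsto t atTop (𝓝 0) :=
    Tendsto.congr' (hev0.mono fun k hk => hk.symm) tendsto_const_nhds
  exact tendsto_nhds_unique httend ht0'

end NormalCones2

section PerK

variable {n m : ℕ}

lemma per_k (a : Eu n) (ha : a ≠ 0) (β : ℝ) (x : Eu n) (hx : ⟪a, x⟫ ≤ β)
    (c xv y : Eu n) (t : ℝ) (ht : 0 ≤ t) (hxv : xv = c + t • a)
    (htint : ⟪a, x⟫ < β → t = 0)
    (hy : y ∈ projSet (tangCone {x : Eu n | ⟪a, x⟫ ≤ β} x) xv) :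
    ∃ r : ℝ, y = c + r • a ∧ min 0 (-⟪c, a⟫ / ‖a‖ ^ 2) ≤ r ∧
      r ≤ max 0 (-⟪c, a⟫ / ‖a‖ ^ 2) ∧
      (0 < ⟪c, a⟫ → r = 0 ∨ r = -⟪c, a⟫ / ‖a‖ ^ 2) := by
  have hna : (0:ℝ) < ‖a‖ ^ 2 := by
    have : 0 < ‖a‖ := norm_pos_iff.mpr ha
    positivity
  rcases lt_or_eq_of_le hx with hint | hbd
  · rw [tangCone_interior a β x hint, projSet_univ] at hy
    have hy' : y = xv := hy
    refine ⟨0, ?_, le_trans (min_le_left _ _) le_rfl, le_max_left _ _, fun _ => Or.inl rfl⟩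
    rw [hy', hxv, htint hint]
  · rw [tangCone_boundary a β x hbd, projSet_halfspace a ha] at hy
    have hy' : y = xv - (max ⟪xv, a⟫ 0 / ‖a‖ ^ 2) • a := hy
    set μ : ℝ := ⟪c, a⟫ with hμd
    have hxva : ⟪xv, a⟫ = μ + t * ‖a‖ ^ 2 := by
      rw [hxv, inner_add_left, real_inner_smul_left, real_inner_self_eq_norm_sq]
    rcases le_or_gt (μ + t * ‖a‖ ^ 2) 0 with hcase | hcase
    · have hmax : max ⟪xv, a⟫ 0 = 0 := max_eq_right (by rw [hxva]; exact hcase)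
      refine ⟨t, ?_, le_trans (min_le_left _ _) ht, ?_, fun hμp => absurd hμp (by nlinarith)⟩
      · rw [hy', hmax, hxv]; simp
      · refine le_trans ?_ (le_max_right _ _)
        rw [le_div_iff₀ hna]
        nlinarith
    · have hge : (0:ℝ) ≤ ⟪xv, a⟫ := by rw [hxva]; exact hcase.le
      have hmax : max ⟪xv, a⟫ 0 = μ + t * ‖a‖ ^ 2 := by rw [max_eq_left hge, hxva]
      refine ⟨-μ / ‖a‖ ^ 2, ?_, min_le_right _ _, le_max_right _ _, fun _ => Or.inr rfl⟩
      rw [hy', hmax, hxv]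
      have hcoef : (μ + t * ‖a‖ ^ 2) / ‖a‖ ^ 2 = μ / ‖a‖ ^ 2 + t := by
        field_simp
      rw [hcoef]
      have : -μ / ‖a‖ ^ 2 = -(μ / ‖a‖ ^ 2) := by ring
      rw [this]
      module

lemma sub_main (F : Eu n → Eu m) (hF : ContDiff ℝ 1 F) (a : Eu n) (ha : a ≠ 0) (β : ℝ)
    (xb : Eu n) (hxb : ⟪a, xb⟫ = β) (y : Eu m) (xs : Eu n)
    (hmem : xs ∈ projCoderiv (fun x => ({F x} : Set (Eu m))) {x : Eu n | ⟪a, x⟫ ≤ β}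
      xb (F xb) y) :
    ∃ s : ℝ, xs = (ContinuousLinearMap.adjoint (fderiv ℝ F xb)) y + s • a ∧
      min 0 (-⟪(ContinuousLinearMap.adjoint (fderiv ℝ F xb)) y, a⟫ / ‖a‖ ^ 2) ≤ s ∧
      s ≤ max 0 (-⟪(ContinuousLinearMap.adjoint (fderiv ℝ F xb)) y, a⟫ / ‖a‖ ^ 2) ∧
      (0 < ⟪(ContinuousLinearMap.adjoint (fderiv ℝ F xb)) y, a⟫ →
        s = 0 ∨ s = -⟪(ContinuousLinearMap.adjoint (fderiv ℝ F xb)) y, a⟫ / ‖a‖ ^ 2) := by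
  have hna : (0:ℝ) < ‖a‖ ^ 2 := by
    have : 0 < ‖a‖ := norm_pos_iff.mpr ha
    positivity
  set d : Eu n := (ContinuousLinearMap.adjoint (fderiv ℝ F xb)) y with hdd
  obtain ⟨x, u, xv, uv, yk, hGmem, hlim, hproj, hxlim, hulim, huvlim, hyklim⟩ := hmem
  have hxX : ∀ k, ⟪a, x k⟫ ≤ β := fun k => (hGmem k).1
  have huF : ∀ k, u k = F (x k) := fun k => (hGmem k).2
  have hlim' : ∀ k, (xv k, -(uv k)) ∈ limNormalP
      (svGraph (fun x => ({F x} : Set (Eu m))) {x : Eu n | ⟪a, x⟫ ≤ β})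
      (x k, F (x k)) := fun k => by rw [← huF k]; exact hlim k
  choose t ht0 hteq htint using fun k =>
    limN_struct F hF a ha β (x k) (hxX k) (xv k) (-(uv k)) (hlim' k)
  set c : ℕ → Eu n := fun k => (ContinuousLinearMap.adjoint (fderiv ℝ F (x k))) (uv k)
    with hcd
  have hxvc : ∀ k, xv k = c k + t k • a := by
    intro k
    rw [hteq k, map_neg, neg_neg]
  choose r hyr hrlo hrhi hrpair using fun k =>
    per_k a ha β (x k) (hxX k) (c k) (xv k) (yk k) (t k) (ht0 k) (hxvc k) (htint k)
      (hproj k)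
  have hc : Tendsto c atTop (𝓝 d) := adj_tendsto F hF hxlim huvlim
  have hrk : ∀ k, r k = ⟪yk k - c k, a⟫ / ‖a‖ ^ 2 := by
    intro k
    rw [hyr k]
    have : c k + r k • a - c k = r k • a := by abel
    rw [this, real_inner_smul_left, real_inner_self_eq_norm_sq]
    field_simp
  set s : ℝ := ⟪xs - d, a⟫ / ‖a‖ ^ 2 with hs
  have hr : Tendsto r atTop (𝓝 s) :=
    ((((hyklim.sub hc).inner tendsto_const_nhds).div_const _)).congr fun k => (hrk k).symm
  have hxs : xs = d + s • a :=
    tendsto_nhds_unique hyklim ((hc.add (hr.smul_const a)).congr fun k => (hyr k).symm)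
  have hμ'lim : Tendsto (fun k => ⟪c k, a⟫) atTop (𝓝 ⟪d, a⟫) :=
    hc.inner tendsto_const_nhds
  have hqlim : Tendsto (fun k => -⟪c k, a⟫ / ‖a‖ ^ 2) atTop (𝓝 (-⟪d, a⟫ / ‖a‖ ^ 2)) :=
    (hμ'lim.neg).div_const _
  refine ⟨s, hxs, ?_, ?_, ?_⟩
  · exact le_of_tendsto_of_tendsto' (tendsto_const_nhds.min hqlim) hr hrlo
  · exact le_of_tendsto_of_tendsto' hr (tendsto_const_nhds.max hqlim) hrhi
  · intro hμpos
    have hev : ∀ᶠ k in atTop, 0 < ⟪c k, a⟫ := hμ'lim.eventually (lt_mem_nhds hμpos)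
    have hevpair : ∀ᶠ k in atTop, r k = 0 ∨ r k = -⟪c k, a⟫ / ‖a‖ ^ 2 :=
      hev.mono fun k hk => hrpair k hk
    by_cases hfreq : ∃ᶠ k in atTop, r k = 0
    · obtain ⟨φ, hφ, hφ0⟩ := extraction_of_frequently_atTop hfreq
      left
      have h1 : Tendsto (fun j => r (φ j)) atTop (𝓝 s) := hr.comp hφ.tendsto_atTop
      have h2 : Tendsto (fun j => r (φ j)) atTop (𝓝 0) := by
        have : (fun j => r (φ j)) = fun _ => (0:ℝ) := funext hφ0
        rw [this]; exact tendsto_const_nhds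
      exact tendsto_nhds_unique h1 h2
    · right
      rw [Filter.not_frequently] at hfreq
      have hev2 : ∀ᶠ k in atTop, r k = -⟪c k, a⟫ / ‖a‖ ^ 2 :=
        (hevpair.and hfreq).mono fun k hk => hk.1.resolve_left hk.2
      have h1 : Tendsto r atTop (𝓝 (-⟪d, a⟫ / ‖a‖ ^ 2)) :=
        Tendsto.congr' (hev2.mono fun k hk => hk.symm) hqlim
      exact tendsto_nhds_unique hr h1

end PerK

/-- Remark 2.2, half-space case: for a `C¹` mapping `F` and the half-space
`X = {x | ⟨a, x⟩ ≤ β}`, at a boundary point `x̄` the projectional coderivative is the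
segment `[∇F(x̄)*y, proj_{[a]^⊥}(∇F(x̄)*y)]` if `⟨∇F(x̄)*y, a⟩ ≤ 0`, and the two-point set
`{∇F(x̄)*y, proj_{[a]^⊥}(∇F(x̄)*y)}` otherwise. -/
theorem projCoderiv_smooth_halfspace {n m : ℕ} (F : Eu n → Eu m) (hF : ContDiff ℝ 1 F)
    (a : Eu n) (ha : a ≠ 0) (β : ℝ) (xb : Eu n) (hxb : ⟪a, xb⟫ = β) :
    ∀ y : Eu m,
      (⟪ContinuousLinearMap.adjoint (fderiv ℝ F xb) y, a⟫ ≤ 0 →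
        projCoderiv (fun x => {F x}) {x : Eu n | ⟪a, x⟫ ≤ β} xb (F xb) y =
          segment ℝ (ContinuousLinearMap.adjoint (fderiv ℝ F xb) y)
            (ContinuousLinearMap.adjoint (fderiv ℝ F xb) y -
              (⟪ContinuousLinearMap.adjoint (fderiv ℝ F xb) y, a⟫ / ‖a‖ ^ 2) • a)) ∧
      (0 < ⟪ContinuousLinearMap.adjoint (fderiv ℝ F xb) y, a⟫ →
        projCoderiv (fun x => {F x}) {x : Eu n | ⟪a, x⟫ ≤ β} xb (F xb) y =
          {ContinuousLinearMap.adjoint (fderiv ℝ F xb) y,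
            ContinuousLinearMap.adjoint (fderiv ℝ F xb) y -
              (⟪ContinuousLinearMap.adjoint (fderiv ℝ F xb) y, a⟫ / ‖a‖ ^ 2) • a}) := by
  intro y
  have hna : (0:ℝ) < ‖a‖ ^ 2 := by
    have : 0 < ‖a‖ := norm_pos_iff.mpr ha
    positivity
  set d : Eu n := ContinuousLinearMap.adjoint (fderiv ℝ F xb) y with hdd
  set μ : ℝ := ⟪d, a⟫ with hμd
  set e : Eu n := d - (μ / ‖a‖ ^ 2) • a with hed
  have hxbX : ⟪a, xb⟫ ≤ β := le_of_eq hxb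
  have hbdry : ∀ τ : ℝ, 0 ≤ τ → μ + τ * ‖a‖ ^ 2 ≤ 0 →
      (d + τ • a) ∈ projCoderiv (fun x => ({F x} : Set (Eu m)))
        {x : Eu n | ⟪a, x⟫ ≤ β} xb (F xb) y := by
    intro τ hτ0 hτle
    refine ⟨fun _ => xb, fun _ => F xb, fun _ => d + τ • a, fun _ => y, fun _ => d + τ • a,
      fun _ => ⟨hxbX, rfl⟩, fun _ => limN_mem F hF a β xb hxbX y τ hτ0 (Or.inr hxb),
      fun _ => ?_, tendsto_const_nhds, tendsto_const_nhds, tendsto_const_nhds,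
      tendsto_const_nhds⟩
    rw [tangCone_boundary a β xb hxb, projSet_halfspace a ha]
    have hip : ⟪d + τ • a, a⟫ = μ + τ * ‖a‖ ^ 2 := by
      rw [inner_add_left, real_inner_smul_left, real_inner_self_eq_norm_sq]
    have hmax : max ⟪d + τ • a, a⟫ 0 = 0 := max_eq_right (by rw [hip]; exact hτle)
    rw [hmax]
    simp
  have hbdry2 : 0 < μ → e ∈ projCoderiv (fun x => ({F x} : Set (Eu m)))
      {x : Eu n | ⟪a, x⟫ ≤ β} xb (F xb) y := by
    intro hμpos
    have hlm := limN_mem F hF a β xb hxbX y 0 le_rfl (Or.inr hxb)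
    rw [zero_smul, add_zero] at hlm
    refine ⟨fun _ => xb, fun _ => F xb, fun _ => d, fun _ => y, fun _ => e,
      fun _ => ⟨hxbX, rfl⟩, fun _ => hlm, fun _ => ?_, tendsto_const_nhds,
      tendsto_const_nhds, tendsto_const_nhds, tendsto_const_nhds⟩
    rw [tangCone_boundary a β xb hxb, projSet_halfspace a ha]
    have hmax : max ⟪d, a⟫ 0 = μ := max_eq_left (le_of_lt hμpos)
    rw [hmax, hed]
    rfl
  have hinter : d ∈ projCoderiv (fun x => ({F x} : Set (Eu m)))
      {x : Eu n | ⟪a, x⟫ ≤ β} xb (F xb) y := by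
    set x : ℕ → Eu n := fun k => xb - ((1:ℝ) / (k + 1)) • a with hxd
    have hint : ∀ k, ⟪a, x k⟫ < β := by
      intro k
      rw [hxd]
      simp only [inner_sub_right, real_inner_smul_right, real_inner_self_eq_norm_sq, hxb]
      have h1 : (0:ℝ) < 1 / ((k:ℝ) + 1) := by positivity
      nlinarith
    have hxtend : Tendsto x atTop (𝓝 xb) := by
      have h1 : Tendsto (fun k : ℕ => ((1:ℝ) / (k + 1)) • a) atTop (𝓝 ((0:ℝ) • a)) :=
        tendsto_inv_succ.smul_const a
      rw [zero_smul] at h1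
      have h2 := tendsto_const_nhds.sub h1 (f := fun _ : ℕ => xb)
      rw [hxd]
      simpa using h2
    refine ⟨x, fun k => F (x k),
      fun k => (ContinuousLinearMap.adjoint (fderiv ℝ F (x k))) y, fun _ => y,
      fun k => (ContinuousLinearMap.adjoint (fderiv ℝ F (x k))) y,
      fun k => ⟨le_of_lt (hint k), rfl⟩, fun k => ?_, fun k => ?_, hxtend,
      (hF.continuous.tendsto xb).comp hxtend, tendsto_const_nhds,
      adj_tendsto F hF hxtend tendsto_const_nhds⟩
    · have hlm := limN_mem F hF a β (x k) (le_of_lt (hint k)) y 0 le_rfl (Or.inl rfl)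
      rw [zero_smul, add_zero] at hlm
      exact hlm
    · rw [tangCone_interior a β (x k) (hint k), projSet_univ]
      rfl
  constructor
  · -- case μ ≤ 0 : segment
    intro hμ
    ext xs
    rw [segment_eq_image']
    constructor
    · intro hmem
      obtain ⟨s, hxs, hlo, hhi, _⟩ := sub_main F hF a ha β xb hxb y xs hmem
      rw [← hdd] at hxs hlo hhi
      rw [← hμd] at hlo hhi
      have hqnn : (0:ℝ) ≤ -μ / ‖a‖ ^ 2 := div_nonneg (by linarith) hna.le
      rw [min_eq_left hqnn] at hlo
      rw [max_eq_right hqnn] at hhi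
      rcases lt_or_eq_of_le hμ with hlt | heq
      · refine ⟨s * ‖a‖ ^ 2 / (-μ), ⟨?_, ?_⟩, ?_⟩
        · exact div_nonneg (mul_nonneg hlo hna.le) (by linarith)
        · rw [div_le_one (by linarith)]
          rw [le_div_iff₀ hna] at hhi
          linarith
        · have hediff : e - d = (-(μ / ‖a‖ ^ 2)) • a := by
            rw [hed]; module
          have hμne : μ ≠ 0 := ne_of_lt hlt
          show d + (s * ‖a‖ ^ 2 / (-μ)) • (e - d) = xs
          rw [hediff, smul_smul, hxs]
          congr 1
          rw [show s * ‖a‖ ^ 2 / (-μ) * (-(μ / ‖a‖ ^ 2)) = s from by field_simp <;> ring]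
      · refine ⟨0, ⟨le_rfl, zero_le_one⟩, ?_⟩
        have hs0 : s = 0 := by
          rw [heq] at hhi
          simp only [neg_zero, zero_div] at hhi
          linarith
        show d + (0:ℝ) • (e - d) = xs
        rw [hxs, hs0]
        simp
    · rintro ⟨θ, ⟨hθ0, hθ1⟩, rfl⟩
      have hediff : e - d = (-(μ / ‖a‖ ^ 2)) • a := by
        rw [hed]; module
      set τ : ℝ := θ * (-(μ / ‖a‖ ^ 2)) with hτd
      have hq0 : (0:ℝ) ≤ -(μ / ‖a‖ ^ 2) := by
        rw [neg_nonneg]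
        exact div_nonpos_of_nonpos_of_nonneg hμ hna.le
      have hτ0 : 0 ≤ τ := mul_nonneg hθ0 hq0
      have hτle : μ + τ * ‖a‖ ^ 2 ≤ 0 := by
        have h1 : τ ≤ -(μ / ‖a‖ ^ 2) := by nlinarith
        have h2 : -(μ / ‖a‖ ^ 2) * ‖a‖ ^ 2 = -μ := by field_simp
        nlinarith
      have heq2 : d + θ • (e - d) = d + τ • a := by
        rw [hediff, smul_smul]
      show d + θ • (e - d) ∈ _
      rw [heq2]
      exact hbdry τ hτ0 hτle
  · -- case 0 < μ : two points
    intro hμ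
    ext xs
    simp only [mem_insert_iff, mem_singleton_iff]
    constructor
    · intro hmem
      obtain ⟨s, hxs, _, _, hpair⟩ := sub_main F hF a ha β xb hxb y xs hmem
      rw [← hdd] at hxs hpair
      rw [← hμd] at hpair
      rcases hpair hμ with h0 | hsv
      · left
        rw [hxs, h0, zero_smul, add_zero]
      · right
        rw [hxs, hsv, hed]
        have : -μ / ‖a‖ ^ 2 = -(μ / ‖a‖ ^ 2) := by ring
        rw [this]
        module
    · rintro (rfl | rfl)
      · exact hinter
      · exact hbdry2 hμ
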